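/- arXiv:1309.3803 — 6 statements merged into one kernel-verified Lean document; each statement's English description precedes it below -/
import Mathlib

section
/- Let π be a group and φ a normal subgroup of π whose center is trivial. Then the quotient homomorphism π → π/φ admits a group-homomorphism section if and only if there exists a group homomorphism ψ : π/φ → Aut(φ) such that for every x ∈ π there exists n ∈ φ with ψ(xφ)(m) = (x n) m (x n)⁻¹ for all m ∈ φ (i.e. the action of π/φ on φ by outer automorphisms induced by conjugation in π lifts to a genuine action by automorphisms). -/
/-- Let `π` be a group and `φ` a normal subgroup of `π` whose center is trivial.
Then the quotient homomorphism `π → π/φ` admits a group-homomorphism section if and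
only if the outer action of `π/φ` on `φ` induced by conjugation in `π` lifts to a
homomorphism `ψ : π/φ → Aut(φ)`. -/
theorem quotient_splits_iff_outer_action_lifts (π : Type*) [Group π]
    (φ : Subgroup π) [φ.Normal] (hcenter : Subgroup.center φ = ⊥) :
    (∃ s : (π ⧸ φ) →* π, (QuotientGroup.mk' φ).comp s = MonoidHom.id (π ⧸ φ)) ↔
      ∃ ψ : (π ⧸ φ) →* MulAut φ,
        ∀ x : π, ∃ n : φ, ∀ m : φ,
          ((ψ (QuotientGroup.mk x)) m : π) = (x * n) * m * (x * n)⁻¹ := by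
  constructor
  · rintro ⟨s, hs⟩
    refine ⟨(MulAut.conjNormal (H := φ)).comp s, fun x => ?_⟩
    have hsx : QuotientGroup.mk (s (QuotientGroup.mk x)) = (QuotientGroup.mk x : π ⧸ φ) := by
      have := congrArg (fun f => f (QuotientGroup.mk x : π ⧸ φ)) hs
      simpa using this
    have hmem : x⁻¹ * s (QuotientGroup.mk x) ∈ φ := by
      rw [← QuotientGroup.eq]
      exact hsx.symm
    refine ⟨⟨_, hmem⟩, fun m => ?_⟩
    have hx : x * (x⁻¹ * s (QuotientGroup.mk x)) = s (QuotientGroup.mk x) := by group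
    show ((MulAut.conjNormal (s (QuotientGroup.mk x)) m : φ) : π) = _
    simp [hx]
  · rintro ⟨ψ, h⟩
    have uniq : ∀ (q : π ⧸ φ) (y z : π), QuotientGroup.mk y = q → QuotientGroup.mk z = q →
        (∀ m : φ, ((ψ q) m : π) = y * m * y⁻¹) →
        (∀ m : φ, ((ψ q) m : π) = z * m * z⁻¹) → y = z := by
      intro q y z hy hz hyc hzc
      have hmem : y⁻¹ * z ∈ φ := by
        rw [← QuotientGroup.eq, hy, hz]
      have hc : (⟨y⁻¹ * z, hmem⟩ : φ) ∈ Subgroup.center φ := by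
        rw [Subgroup.mem_center_iff]
        intro g
        apply Subtype.ext
        have heq : y * (g : π) * y⁻¹ = z * g * z⁻¹ := by rw [← hyc g, hzc g]
        show (g : π) * (y⁻¹ * z) = (y⁻¹ * z) * g
        calc (g : π) * (y⁻¹ * z) = y⁻¹ * (y * g * y⁻¹) * z := by group
          _ = y⁻¹ * (z * g * z⁻¹) * z := by rw [heq]
          _ = (y⁻¹ * z) * g := by group
      rw [hcenter, Subgroup.mem_bot] at hc
      have : y⁻¹ * z = 1 := congrArg Subtype.val hc
      exact (inv_mul_eq_one.mp this)
    have key : ∀ q : π ⧸ φ, ∃ y : π, QuotientGroup.mk y = q ∧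
        ∀ m : φ, ((ψ q) m : π) = y * m * y⁻¹ := by
      intro q
      obtain ⟨n, hn⟩ := h q.out
      refine ⟨q.out * n, ?_, ?_⟩
      · rw [QuotientGroup.mk_mul_of_mem _ n.2, QuotientGroup.out_eq']
      · intro m
        have := hn m
        rwa [QuotientGroup.out_eq'] at this
    set sf : π ⧸ φ → π := fun q => (key q).choose with hsf
    have sf_spec : ∀ q, QuotientGroup.mk (sf q) = q ∧
        ∀ m : φ, ((ψ q) m : π) = sf q * m * (sf q)⁻¹ := fun q => (key q).choose_spec
    refine ⟨{ toFun := sf, map_one' := ?_, map_mul' := ?_ }, ?_⟩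
    · refine uniq 1 (sf 1) 1 (sf_spec 1).1 (by simp) (sf_spec 1).2 ?_
      intro m; simp
    · intro q r
      refine uniq (q * r) (sf (q * r)) (sf q * sf r) (sf_spec (q * r)).1 ?_
        (sf_spec (q * r)).2 ?_
      · show (QuotientGroup.mk (sf q * sf r) : π ⧸ φ) = q * r
        rw [QuotientGroup.mk_mul, (sf_spec q).1, (sf_spec r).1]
      · intro m
        have h1 := (sf_spec q).2 (ψ r m)
        have h2 := (sf_spec r).2 m
        rw [map_mul]
        show ((ψ q) ((ψ r) m) : π) = _
        rw [h1, h2]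
        group
    · ext q
      exact (sf_spec q).1
end

section
/- Let π be a group and φ a normal subgroup of π whose center is trivial, and suppose ψ : π/φ → Aut(φ) is a group homomorphism such that for every x ∈ π there exists n ∈ φ with ψ(xφ)(m) = (x n) m (x n)⁻¹ for all m ∈ φ. Then there is a group isomorphism Θ from π to the semidirect product φ ⋊_ψ (π/φ) such that Θ sends each m ∈ φ to the canonical copy of m in the semidirect product, and the composite of Θ with the projection of the semidirect product onto π/φ is the quotient homomorphism π → π/φ. In particular, an extension with centerless kernel is determined up to equivalence by its outer action. -/
/-- Let `π` be a group and `φ` a normal subgroup with trivial center, and suppose the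
outer action of `π/φ` on `φ` induced by conjugation lifts to `ψ : π/φ →* Aut(φ)`.
Then `π` is isomorphic to the semidirect product `φ ⋊[ψ] (π/φ)` via an isomorphism which
is the canonical inclusion on `φ` and induces the quotient map to `π/φ`.
In particular, an extension with centerless kernel is determined by its outer action. -/
theorem extension_with_centerless_kernel_determined_by_action (π : Type*) [Group π]
    (φ : Subgroup π) [φ.Normal] (hcenter : Subgroup.center φ = ⊥)
    (ψ : (π ⧸ φ) →* MulAut φ)
    (hψ : ∀ x : π, ∃ n : φ, ∀ m : φ,
      ((ψ (QuotientGroup.mk x)) m : π) = (x * n) * m * (x * n)⁻¹) :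
    ∃ Θ : π ≃* φ ⋊[ψ] (π ⧸ φ),
      (∀ m : φ, Θ (m : π) = SemidirectProduct.inl m) ∧
      ∀ g : π, (Θ g).right = QuotientGroup.mk g := by
  classical
  choose n hn using hψ
  set σ : π → π := fun x => x * (n x : π) with hσdef
  have hconj : ∀ (x : π) (m : φ), ((ψ (QuotientGroup.mk x)) m : π) = σ x * m * (σ x)⁻¹ :=
    fun x m => hn x m
  -- uniqueness of the element inducing a given conjugation
  have huniq : ∀ u v : π, v⁻¹ * u ∈ φ →
      (∀ m : φ, u * (m : π) * u⁻¹ = v * m * v⁻¹) → u = v := by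
    intro u v hmem h
    have hz : (⟨v⁻¹ * u, hmem⟩ : φ) ∈ Subgroup.center φ := by
      rw [Subgroup.mem_center_iff]
      intro m
      ext
      have h1 := h m
      push_cast
      calc (m : π) * (v⁻¹ * u) = v⁻¹ * (v * m * v⁻¹) * u := by group
      _ = v⁻¹ * (u * (m : π) * u⁻¹) * u := by rw [h1]
      _ = v⁻¹ * u * (m : π) := by group
    rw [hcenter, Subgroup.mem_bot] at hz
    have : v⁻¹ * u = 1 := congrArg Subtype.val hz
    calc u = v * (v⁻¹ * u) := by group
    _ = v := by rw [this]; group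
  have hσmk : ∀ x : π, (QuotientGroup.mk (σ x) : π ⧸ φ) = QuotientGroup.mk x := by
    intro x
    have : (QuotientGroup.mk (n x : π) : π ⧸ φ) = 1 :=
      (QuotientGroup.eq_one_iff _).2 (n x).2
    simp [hσdef, QuotientGroup.mk_mul, this]
  have hσmem : ∀ x : π, x⁻¹ * σ x ∈ φ := by
    intro x
    simpa [hσdef, mul_assoc] using (n x).2
  -- σ kills φ
  have hσφ : ∀ m : φ, σ (m : π) = 1 := by
    intro m
    refine huniq _ 1 (by simpa using φ.mul_mem ((m : φ)).2 (n m).2) ?_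
    intro k
    have h1 : ((ψ (QuotientGroup.mk (m : π))) k : π) = σ m * k * (σ m)⁻¹ := hconj m k
    have h2 : (QuotientGroup.mk (m : π) : π ⧸ φ) = 1 := (QuotientGroup.eq_one_iff _).2 m.2
    rw [h2, map_one] at h1
    simp at h1
    rw [← h1]; group
  -- σ is multiplicative
  have hσmul : ∀ x y : π, σ (x * y) = σ x * σ y := by
    intro x y
    refine (huniq (σ (x * y)) (σ x * σ y) ?_ ?_)
    · -- (σ x * σ y)⁻¹ * σ (x*y) ∈ φ
      have h1 : (x * y)⁻¹ * σ (x * y) ∈ φ := hσmem (x * y)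
      have h2 : (x * y)⁻¹ * (σ x * σ y) ∈ φ := by
        have hx := hσmem x
        have hy := hσmem y
        have : (x * y)⁻¹ * (σ x * σ y) = (y⁻¹ * (x⁻¹ * σ x) * y) * (y⁻¹ * σ y) := by group
        rw [this]
        exact φ.mul_mem (Subgroup.Normal.conj_mem' ‹φ.Normal› _ hx y) hy
      have : (σ x * σ y)⁻¹ * σ (x * y)
          = ((x * y)⁻¹ * (σ x * σ y))⁻¹ * ((x * y)⁻¹ * σ (x * y)) := by group
      rw [this]
      exact φ.mul_mem (φ.inv_mem h2) h1
    · intro m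
      have h1 : ((ψ (QuotientGroup.mk (x * y))) m : π) = σ (x * y) * m * (σ (x * y))⁻¹ :=
        hconj (x * y) m
      have h2 : ((ψ (QuotientGroup.mk (x * y))) m : π) = σ x * (σ y * m * (σ y)⁻¹) * (σ x)⁻¹ := by
        have : (QuotientGroup.mk (x * y) : π ⧸ φ)
            = QuotientGroup.mk x * QuotientGroup.mk y := rfl
        rw [this, map_mul]
        have h3 : ((ψ (QuotientGroup.mk y)) m : π) = σ y * m * (σ y)⁻¹ := hconj y m
        have h4 := hconj x ((ψ (QuotientGroup.mk y)) m)
        rw [MulAut.mul_apply, h4, h3]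
      rw [← h1, h2]; group
  -- σ is idempotent
  have hσσ : ∀ x : π, σ (σ x) = σ x := by
    intro x
    refine huniq _ _ (by simpa using hσmem (σ x)) ?_
    intro m
    have h1 := hconj (σ x) m
    rw [hσmk x] at h1
    rw [← h1, hconj x m]
  -- the φ-component
  have hamem : ∀ x : π, x * (σ x)⁻¹ ∈ φ := by
    intro x
    have := φ.inv_mem (hσmem x)
    have heq : x * (σ x)⁻¹ = x * ((σ x)⁻¹ * x) * x⁻¹ := by group
    rw [heq]
    exact Subgroup.Normal.conj_mem ‹φ.Normal› _ (by simpa [mul_comm] using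
      (by simpa [mul_inv_rev] using this : (σ x)⁻¹ * x ∈ φ)) x
  set a : π → φ := fun x => ⟨x * (σ x)⁻¹, hamem x⟩ with hadef
  have ha1 : a 1 = 1 := by
    have h1 : σ (1 : π) = 1 := by simpa using hσφ 1
    ext
    simp [hadef, h1]
  -- forward homomorphism
  let f : π →* φ ⋊[ψ] (π ⧸ φ) :=
  { toFun := fun x => ⟨a x, QuotientGroup.mk x⟩
    map_one' := by
      refine SemidirectProduct.ext ?_ ?_
      · simpa using ha1
      · simp
    map_mul' := by
      intro x y
      refine SemidirectProduct.ext ?_ rfl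
      show a (x * y) = a x * (ψ (QuotientGroup.mk x)) (a y)
      ext
      push_cast [hadef]
      rw [hconj x (a y)]
      show x * y * (σ (x * y))⁻¹ = x * (σ x)⁻¹ * (σ x * (y * (σ y)⁻¹) * (σ x)⁻¹)
      rw [hσmul x y]; group }
  have hfbij : Function.Bijective f := by
    constructor
    · intro x y hxy
      have hr : (QuotientGroup.mk x : π ⧸ φ) = QuotientGroup.mk y :=
        congrArg SemidirectProduct.right hxy
      have hl : (a x : π) = a y := congrArg (fun z => ((SemidirectProduct.left z : φ) : π)) hxy
      have hxy' : y⁻¹ * x ∈ φ := QuotientGroup.eq.mp hr.symm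
      have hσxy : σ x = σ y := by
        have : x = y * (y⁻¹ * x) := by group
        rw [this, hσmul, hσφ ⟨_, hxy'⟩]
        group
      have : x * (σ x)⁻¹ = y * (σ y)⁻¹ := hl
      rw [hσxy] at this
      exact mul_right_cancel this
    · rintro ⟨m, b⟩
      obtain ⟨x, rfl⟩ := QuotientGroup.mk_surjective b
      refine ⟨(m : π) * σ x, ?_⟩
      refine SemidirectProduct.ext ?_ ?_
      · show a ((m : π) * σ x) = m
        ext
        show (m : π) * σ x * (σ ((m : π) * σ x))⁻¹ = m
        rw [hσmul, hσφ m, hσσ]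
        group
      · show (QuotientGroup.mk ((m : π) * σ x) : π ⧸ φ) = QuotientGroup.mk x
        have h1 : (QuotientGroup.mk (m : π) : π ⧸ φ) = 1 :=
          (QuotientGroup.eq_one_iff _).2 m.2
        calc (QuotientGroup.mk ((m : π) * σ x) : π ⧸ φ)
            = QuotientGroup.mk (m : π) * QuotientGroup.mk (σ x) := rfl
        _ = QuotientGroup.mk x := by rw [h1, one_mul, hσmk]
  refine ⟨MulEquiv.ofBijective f hfbij, ?_, ?_⟩
  · intro m
    show f (m : π) = SemidirectProduct.inl m
    refine SemidirectProduct.ext ?_ ?_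
    · show a (m : π) = m
      ext
      show (m : π) * (σ (m : π))⁻¹ = m
      rw [hσφ m]; group
    · show (QuotientGroup.mk (m : π) : π ⧸ φ) = 1
      exact (QuotientGroup.eq_one_iff _).2 m.2
  · intro g
    rfl
end

section
/- Let p : π → β be a surjective group homomorphism that admits a group-homomorphism section s : β → π (so p ∘ s = id), and let K = ker p. Then the abelianization of π is isomorphic to the direct product (K / [π, K]) × (abelianization of β), where [π, K] is the subgroup of π generated by all commutators [g, k] with g ∈ π and k ∈ K (note [π, K] ≤ K since K is normal). -/
open scoped commutatorElement

section Aux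

variable {π β : Type*} [Group π] [Group β]

instance auxCommGroup (p : π →* β) :
    CommGroup (p.ker ⧸ (⁅(⊤ : Subgroup π), p.ker⁆.subgroupOf p.ker)) :=
  { (inferInstance : Group _) with
    mul_comm := by
      intro a b
      induction a using QuotientGroup.induction_on with | H x =>
      induction b using QuotientGroup.induction_on with | H y =>
      rw [← QuotientGroup.mk_mul, ← QuotientGroup.mk_mul, QuotientGroup.eq,
        Subgroup.mem_subgroupOf]
      have mem : ⁅((y : π))⁻¹, ((x : π))⁻¹⁆ ∈ ⁅(⊤ : Subgroup π), p.ker⁆ :=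
        Subgroup.commutator_mem_commutator (Subgroup.mem_top _) (inv_mem x.2)
      convert mem using 1
      push_cast
      simp [commutatorElement_def]
      group }

theorem aux_section_apply (p : π →* β) (s : β →* π) (hs : p.comp s = MonoidHom.id β) (b : β) :
    p (s b) = b := MonoidHom.ext_iff.mp hs b

end Aux

/-- If a surjective group homomorphism `p : π → β` admits a section `s : β → π`
and `K = ker p`, then the abelianization of `π` is isomorphic to
`(K / [π, K]) × (abelianization of β)`. -/
theorem abelianization_of_split_extension (π β : Type*) [Group π] [Group β]
    (p : π →* β) (hp : Function.Surjective p)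
    (s : β →* π) (hs : p.comp s = MonoidHom.id β) :
    Nonempty (Abelianization π ≃*
      ((p.ker ⧸ (⁅(⊤ : Subgroup π), p.ker⁆.subgroupOf p.ker)) × Abelianization β)) := by
  have hps : ∀ b, p (s b) = b := aux_section_apply p s hs
  have hmem : ∀ g : π, g * (s (p g))⁻¹ ∈ p.ker := by
    intro g
    simp [p.mem_ker, hps]
  -- the forward map
  let φ1 : π →* p.ker ⧸ (⁅(⊤ : Subgroup π), p.ker⁆.subgroupOf p.ker) :=
    MonoidHom.mk' (fun g => QuotientGroup.mk ⟨g * (s (p g))⁻¹, hmem g⟩) (by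
      intro g h
      rw [← QuotientGroup.mk_mul, QuotientGroup.eq, Subgroup.mem_subgroupOf]
      have hb : h * (s (p h))⁻¹ ∈ p.ker := hmem h
      have mem : ⁅s (p g), (h * (s (p h))⁻¹)⁻¹⁆ ∈ ⁅(⊤ : Subgroup π), p.ker⁆ :=
        Subgroup.commutator_mem_commutator (Subgroup.mem_top _) (inv_mem hb)
      convert mem using 1
      push_cast
      simp [commutatorElement_def, map_mul]
      group)
  let f : π →* (p.ker ⧸ (⁅(⊤ : Subgroup π), p.ker⁆.subgroupOf p.ker)) × Abelianization β :=
    φ1.prod ((Abelianization.of).comp p)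
  let F := Abelianization.lift f
  -- the backward map
  let g1 : (p.ker ⧸ (⁅(⊤ : Subgroup π), p.ker⁆.subgroupOf p.ker)) →* Abelianization π :=
    QuotientGroup.lift _ ((Abelianization.of).comp p.ker.subtype) (by
      intro x hx
      rw [Subgroup.mem_subgroupOf] at hx
      have : (x : π) ∈ commutator π := by
        rw [commutator_def]
        exact Subgroup.commutator_mono le_top le_top hx
      exact Abelianization.commutator_subset_ker Abelianization.of this)
  let g2 : Abelianization β →* Abelianization π :=
    Abelianization.lift ((Abelianization.of).comp s)
  let G := g1.coprod g2
  have hF : ∀ y : π, F (Abelianization.of y) = (φ1 y, Abelianization.of (p y)) := fun y => rfl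
  refine ⟨MonoidHom.toMulEquiv F G ?_ ?_⟩
  · ext x
    show G (F (Abelianization.of x)) = Abelianization.of x
    rw [hF]
    show g1 (φ1 x) * g2 (Abelianization.of (p x)) = Abelianization.of x
    show Abelianization.of (x * (s (p x))⁻¹) * Abelianization.of (s (p x)) = Abelianization.of x
    rw [← map_mul]
    group
  · have h1 : ∀ a, F (G (a, 1)) = (a, 1) := by
      intro a
      induction a using QuotientGroup.induction_on with | H x =>
      have hx : p (x : π) = 1 := x.2
      have hG : G ((QuotientGroup.mk x :
          p.ker ⧸ (⁅(⊤ : Subgroup π), p.ker⁆.subgroupOf p.ker)), 1)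
          = Abelianization.of (x : π) := by
        show g1 (QuotientGroup.mk x) * g2 1 = _
        show Abelianization.of (x : π) * g2 1 = _
        simp
      rw [hG, hF]
      refine Prod.ext ?_ ?_
      · show QuotientGroup.mk ⟨(x : π) * (s (p (x : π)))⁻¹, _⟩ = QuotientGroup.mk x
        congr 1
        ext
        simp [hx]
      · simp [hx]
    have h2 : ∀ b, F (G (1, b)) = (1, b) := by
      intro b
      induction b using QuotientGroup.induction_on with | H x =>
      have hG : G (1, Abelianization.of x) = Abelianization.of (s x) := by
        show g1 1 * g2 (Abelianization.of x) = _
        simp [g2]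
      show F (G (1, Abelianization.of x)) = (1, Abelianization.of x)
      rw [hG, hF]
      refine Prod.ext ?_ ?_
      · show (QuotientGroup.mk ⟨s x * (s (p (s x)))⁻¹, hmem (s x)⟩ :
          p.ker ⧸ (⁅(⊤ : Subgroup π), p.ker⁆.subgroupOf p.ker)) = 1
        rw [show ((1 : p.ker ⧸ (⁅(⊤ : Subgroup π), p.ker⁆.subgroupOf p.ker)))
          = QuotientGroup.mk 1 from rfl]
        congr 1
        ext
        simp [hps]
      · simp [hps]
    refine MonoidHom.ext fun x => ?_
    obtain ⟨a, b⟩ := x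
    have : (a, b) = ((a, 1) : _ × Abelianization β) * (1, b) := by simp
    show F (G (a, b)) = (a, b)
    rw [this, map_mul, map_mul, h1, h2]
end

section
/- Let G be a group with a finitely generated abelian normal subgroup A such that G/A is isomorphic to ℤ × ℤ. Then the quotient homomorphism G → G/A admits a group-homomorphism section if and only if the abelianization of G is isomorphic to the direct product (A / [G, A]) × ℤ × ℤ, where [G, A] is the subgroup of G generated by all commutators [g, a] with g ∈ G and a ∈ A (note [G, A] ≤ A since A is normal). -/
set_option linter.unusedSectionVars false
set_option linter.unusedTactic false
set_option maxHeartbeats 1000000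

open Function
open scoped commutatorElement
open scoped IsMulCommutative

section CommTools

variable {G : Type*} [Group G] (A : Subgroup G) [hAn : A.Normal] [IsMulCommutative A]

private theorem commA {a b : G} (ha : a ∈ A) (hb : b ∈ A) : a * b = b * a :=
  Subgroup.mul_comm_of_mem_isMulCommutative A ha hb

private theorem commEl_mem (g : G) {a : G} (ha : a ∈ A) : ⁅g, a⁆ ∈ A := by
  have h1 : g * a * g⁻¹ ∈ A := hAn.conj_mem a ha g
  rw [commutatorElement_def]
  exact A.mul_mem h1 (A.inv_mem ha)

private theorem commEl_mul_right (v : G) {a b : G} (ha : a ∈ A) (hb : b ∈ A) :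
    ⁅v, a * b⁆ = ⁅v, a⁆ * ⁅v, b⁆ := by
  have key : a⁻¹ * ⁅v, b⁆ = ⁅v, b⁆ * a⁻¹ := commA A (A.inv_mem ha) (commEl_mem A v hb)
  have : ⁅v, a⁆ * ⁅v, b⁆ = ⁅v, a * b⁆ := by
    calc ⁅v, a⁆ * ⁅v, b⁆ = v * a * v⁻¹ * (a⁻¹ * ⁅v, b⁆) := by
          simp only [commutatorElement_def]; group
      _ = v * a * v⁻¹ * (⁅v, b⁆ * a⁻¹) := by rw [key]
      _ = ⁅v, a * b⁆ := by simp only [commutatorElement_def]; group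
  exact this.symm

private theorem commEl_inv_right (v : G) {b : G} (hb : b ∈ A) : ⁅v, b⁻¹⁆ = ⁅v, b⁆⁻¹ := by
  have h := commEl_mul_right A v hb (A.inv_mem hb)
  simp only [mul_inv_cancel, commutatorElement_one_right] at h
  exact (inv_eq_of_mul_eq_one_right h.symm).symm

private theorem conj_left_commEl {k : G} (v : G) {a : G} (hk : k ∈ A) (ha : a ∈ A) :
    ⁅k * v, a⁆ = ⁅v, a⁆ := by
  have key : k * (v * a * v⁻¹) = v * a * v⁻¹ * k := commA A hk (hAn.conj_mem a ha v)
  calc ⁅k * v, a⁆ = k * (v * a * v⁻¹) * k⁻¹ * a⁻¹ := by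
        simp only [commutatorElement_def]; group
    _ = v * a * v⁻¹ * k * k⁻¹ * a⁻¹ := by rw [key]
    _ = ⁅v, a⁆ := by simp only [commutatorElement_def]; group

private def commHom (v : G) : A →* A :=
  MonoidHom.mk' (fun a => ⟨⁅v, (a : G)⁆, commEl_mem A v a.2⟩)
    (fun a b => Subtype.ext (commEl_mul_right A v a.2 b.2))

private def Dsub (x y : G) : Subgroup G :=
  ((commHom A y).range ⊔ (commHom A x).range).map A.subtype

private theorem mem_Dsub {x y g : G} :
    g ∈ Dsub A x y ↔ ∃ a ∈ A, ∃ b ∈ A, g = ⁅y, a⁆ * ⁅x, b⁆ := by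
  constructor
  · rintro ⟨w, hw, rfl⟩
    obtain ⟨u, ⟨a, rfl⟩, v, ⟨b, rfl⟩, rfl⟩ := Subgroup.mem_sup.mp (SetLike.mem_coe.mp hw)
    exact ⟨a, a.2, b, b.2, rfl⟩
  · rintro ⟨a, ha, b, hb, rfl⟩
    exact ⟨(commHom A y) ⟨a, ha⟩ * (commHom A x) ⟨b, hb⟩,
      SetLike.mem_coe.mpr (Subgroup.mem_sup.mpr ⟨_, ⟨⟨a, ha⟩, rfl⟩, _, ⟨⟨b, hb⟩, rfl⟩, rfl⟩), rfl⟩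

private theorem Dsub_normal (x y : G) (habel : ∀ g h : G, ⁅g, h⁆ ∈ A) :
    (Dsub A x y).Normal := by
  constructor
  intro d hd g
  rw [mem_Dsub] at hd ⊢
  obtain ⟨a, ha, b, hb, rfl⟩ := hd
  refine ⟨g * a * g⁻¹, hAn.conj_mem a ha g, g * b * g⁻¹, hAn.conj_mem b hb g, ?_⟩
  have e3 : ⁅g * y * g⁻¹, g * a * g⁻¹⁆ = ⁅y, g * a * g⁻¹⁆ := by
    have hg : g * y * g⁻¹ = ⁅g, y⁆ * y := by simp only [commutatorElement_def]; group
    rw [hg]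
    exact conj_left_commEl A y (habel g y) (hAn.conj_mem a ha g)
  have e4 : ⁅g * x * g⁻¹, g * b * g⁻¹⁆ = ⁅x, g * b * g⁻¹⁆ := by
    have hg : g * x * g⁻¹ = ⁅g, x⁆ * x := by simp only [commutatorElement_def]; group
    rw [hg]
    exact conj_left_commEl A x (habel g x) (hAn.conj_mem b hb g)
  calc g * (⁅y, a⁆ * ⁅x, b⁆) * g⁻¹ = (g * ⁅y, a⁆ * g⁻¹) * (g * ⁅x, b⁆ * g⁻¹) := by group
    _ = ⁅y, g * a * g⁻¹⁆ * ⁅x, g * b * g⁻¹⁆ := by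
        rw [conjugate_commutatorElement, conjugate_commutatorElement, e3, e4]

private theorem commutator_le_Dsub (x y : G) (habel : ∀ g h : G, ⁅g, h⁆ ∈ A)
    (hdec : ∀ g : G, ∃ k ∈ A, ∃ m n : ℤ, g = k * (x ^ m * y ^ n)) :
    ⁅(⊤ : Subgroup G), A⁆ ≤ Dsub A x y := by
  have hN : (Dsub A x y).Normal := Dsub_normal A x y habel
  let T : Subgroup G :=
    { carrier := {g | ∀ a ∈ A, ⁅g, a⁆ ∈ Dsub A x y}
      one_mem' := by
        intro a ha
        simp only [commutatorElement_one_left]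
        exact one_mem _
      mul_mem' := by
        intro u v hu hv a ha
        have key : ⁅u * v, a⁆ = u * ⁅v, a⁆ * u⁻¹ * ⁅u, a⁆ := by
          simp only [commutatorElement_def]; group
        rw [key]
        exact mul_mem (hN.conj_mem _ (hv a ha) u) (hu a ha)
      inv_mem' := by
        intro u hu a ha
        have key : ⁅u⁻¹, a⁆ = u⁻¹ * ⁅u, a⁆⁻¹ * (u⁻¹)⁻¹ := by
          simp only [commutatorElement_def]; group
        rw [key]
        exact hN.conj_mem _ (inv_mem (hu a ha)) u⁻¹ }
  have hxT : x ∈ T := by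
    intro a ha
    exact mem_Dsub A |>.mpr ⟨1, A.one_mem, a, ha, by
      rw [commutatorElement_one_right, one_mul]⟩
  have hyT : y ∈ T := by
    intro a ha
    exact mem_Dsub A |>.mpr ⟨a, ha, 1, A.one_mem, by
      rw [commutatorElement_one_right, mul_one]⟩
  have hAT : ∀ k ∈ A, k ∈ T := by
    intro k hk a ha
    have : ⁅k, a⁆ = 1 := commutatorElement_eq_one_iff_commute.mpr (commA A hk ha)
    rw [this]
    exact one_mem _
  rw [Subgroup.commutator_le]
  intro g _ a ha
  obtain ⟨k, hk, m, n, rfl⟩ := hdec g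
  have hT : k * (x ^ m * y ^ n) ∈ T :=
    mul_mem (hAT k hk) (mul_mem (zpow_mem hxT m) (zpow_mem hyT n))
  exact hT a ha

end CommTools

private theorem addAux {M : Type*} [AddCommGroup M] (a b a₁ b₁ : M) :
    b + a₁ + -(a₁ + -a + -(b₁ + -b)) = a + b₁ := by abel

private theorem mulAux {M : Type*} [CommGroup M] (a b a₁ b₁ c : M)
    (h : c = a₁ * a⁻¹ * (b₁ * b⁻¹)⁻¹) : b * a₁ * c⁻¹ = a * b₁ := by
  subst h
  exact addAux (M := Additive M) a b a₁ b₁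

private theorem fgProd {P Q : Type*} [Group P] [Group Q] [Group.FG P] [Group.FG Q] :
    Group.FG (P × Q) := by
  obtain ⟨S, hS, hSf⟩ := Group.fg_iff.mp ‹Group.FG P›
  obtain ⟨T, hT, hTf⟩ := Group.fg_iff.mp ‹Group.FG Q›
  refine Group.fg_iff.mpr ⟨(MonoidHom.inl P Q) '' S ∪ (MonoidHom.inr P Q) '' T, ?_,
    (hSf.image _).union (hTf.image _)⟩
  rw [eq_top_iff]
  rintro ⟨p, q⟩ -
  have hp : p ∈ Subgroup.closure S := hS.symm ▸ Subgroup.mem_top p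
  have hq : q ∈ Subgroup.closure T := hT.symm ▸ Subgroup.mem_top q
  have h1 : (MonoidHom.inl P Q) p ∈
      Subgroup.closure ((MonoidHom.inl P Q) '' S ∪ (MonoidHom.inr P Q) '' T) := by
    have := Subgroup.mem_map_of_mem (MonoidHom.inl P Q) hp
    rw [MonoidHom.map_closure] at this
    exact Subgroup.closure_mono Set.subset_union_left this
  have h2 : (MonoidHom.inr P Q) q ∈
      Subgroup.closure ((MonoidHom.inl P Q) '' S ∪ (MonoidHom.inr P Q) '' T) := by
    have := Subgroup.mem_map_of_mem (MonoidHom.inr P Q) hq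
    rw [MonoidHom.map_closure] at this
    exact Subgroup.closure_mono Set.subset_union_right this
  have : ((p, q) : P × Q) = (MonoidHom.inl P Q) p * (MonoidHom.inr P Q) q := by simp
  rw [this]
  exact mul_mem h1 h2

private theorem myHopfian {B : Type*} [CommGroup B] [Group.FG B]
    (f : B →* B) (hf : Surjective f) : Injective f := by
  haveI : Module.Finite ℤ (Additive B) := Module.Finite.iff_addGroup_fg.mpr inferInstance
  exact OrzechProperty.injective_of_surjective_endomorphism
    (MonoidHom.toAdditive f).toIntLinearMap hf

/-- Let `G` be a group with a finitely generated abelian normal subgroup `A` such that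
`G/A ≅ ℤ × ℤ`.  Then the quotient homomorphism `G → G/A` admits a group-homomorphism
section if and only if the abelianization of `G` is isomorphic to
`(A / [G, A]) × ℤ × ℤ`. -/
theorem splitting_criterion_over_torus_base (G : Type*) [Group G]
    (A : Subgroup G) [A.Normal] [IsMulCommutative A] [Group.FG A]
    (e : (G ⧸ A) ≃* Multiplicative (ℤ × ℤ)) :
    (∃ s : (G ⧸ A) →* G, (QuotientGroup.mk' A).comp s = MonoidHom.id (G ⧸ A)) ↔
      Nonempty (Abelianization G ≃*
        ((A ⧸ (⁅(⊤ : Subgroup G), A⁆.subgroupOf A)) × Multiplicative (ℤ × ℤ))) := by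
  constructor
  · rintro ⟨s, hs⟩
    have hAn : A.Normal := inferInstance
    set K := (⁅(⊤ : Subgroup G), A⁆).subgroupOf A with hK
    have hsp : ∀ z : G ⧸ A, (QuotientGroup.mk (s z) : G ⧸ A) = z := by
      intro z
      exact DFunLike.congr_fun hs z
    have hrA : ∀ g : G, g * (s (QuotientGroup.mk g))⁻¹ ∈ A := by
      intro g
      rw [← QuotientGroup.eq_one_iff, QuotientGroup.mk_mul, QuotientGroup.mk_inv, hsp]
      simp
    let r : G → A ⧸ K := fun g => QuotientGroup.mk ⟨g * (s (QuotientGroup.mk g))⁻¹, hrA g⟩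
    have hconj : ∀ (g : G) (α : ↥A),
        (QuotientGroup.mk (⟨g * α * g⁻¹, hAn.conj_mem α.1 α.2 g⟩ : ↥A) : A ⧸ K)
          = QuotientGroup.mk α := by
      intro g α
      rw [QuotientGroup.eq]
      rw [Subgroup.mem_subgroupOf]
      have h5 : (((⟨g * α * g⁻¹, hAn.conj_mem α.1 α.2 g⟩ : ↥A)⁻¹ * α : ↥A) : G)
          = ⁅g, (α : G)⁻¹⁆ := by
        simp only [commutatorElement_def, Subgroup.coe_mul, Subgroup.coe_inv]
        group
      rw [h5]
      exact Subgroup.commutator_mem_commutator (Subgroup.mem_top g) (A.inv_mem α.2)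
    have hr_mul : ∀ g h : G, r (g * h) = r g * r h := by
      intro g h
      have hs_mul : s (QuotientGroup.mk (g * h)) =
          s (QuotientGroup.mk g) * s (QuotientGroup.mk h) := by
        rw [QuotientGroup.mk_mul, map_mul]
      have hval : (⟨(g * h) * (s (QuotientGroup.mk (g * h)))⁻¹, hrA (g * h)⟩ : ↥A)
          = ⟨g * (h * (s (QuotientGroup.mk h))⁻¹) * g⁻¹,
              hAn.conj_mem _ (hrA h) g⟩ * ⟨g * (s (QuotientGroup.mk g))⁻¹, hrA g⟩ := by
        apply Subtype.ext
        show (g * h) * (s (QuotientGroup.mk (g * h)))⁻¹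
            = (g * (h * (s (QuotientGroup.mk h))⁻¹) * g⁻¹) * (g * (s (QuotientGroup.mk g))⁻¹)
        rw [hs_mul]
        group
      show QuotientGroup.mk _ = r g * r h
      rw [hval, QuotientGroup.mk_mul, hconj g ⟨h * (s (QuotientGroup.mk h))⁻¹, hrA h⟩]
      exact mul_comm _ _
    let F1 : G →* A ⧸ K := MonoidHom.mk' r hr_mul
    let F : G →* (A ⧸ K) × Multiplicative (ℤ × ℤ) :=
      F1.prod (e.toMonoidHom.comp (QuotientGroup.mk' A))
    let Fhat := Abelianization.lift F
    let j1 : (A ⧸ K) →* Abelianization G := QuotientGroup.lift K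
      (Abelianization.of.comp A.subtype) (by
        intro u hu
        have h1 : (u : G) ∈ commutator G :=
          Subgroup.commutator_mono le_top le_top (Subgroup.mem_subgroupOf.mp hu)
        exact Abelianization.commutator_subset_ker (Abelianization.of : G →* Abelianization G) h1)
    let j2 : Multiplicative (ℤ × ℤ) →* Abelianization G :=
      Abelianization.of.comp (s.comp e.symm.toMonoidHom)
    let J := j1.coprod j2
    refine ⟨{ toFun := Fhat, invFun := J, left_inv := ?_, right_inv := ?_,
              map_mul' := map_mul Fhat }⟩
    · intro t
      refine QuotientGroup.induction_on t ?_
      intro g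
      show J (Fhat (Abelianization.of g)) = Abelianization.of g
      rw [Abelianization.lift_apply_of]
      show j1 (F1 g) * j2 (e (QuotientGroup.mk g)) = Abelianization.of g
      have h1 : j1 (F1 g) = Abelianization.of (g * (s (QuotientGroup.mk g))⁻¹) := rfl
      have h2 : j2 (e (QuotientGroup.mk g))
          = Abelianization.of (s (e.symm (e (QuotientGroup.mk g)))) := rfl
      rw [h1, h2, MulEquiv.symm_apply_apply, ← map_mul]
      congr 1
      group
    · rintro ⟨α, z⟩
      refine QuotientGroup.induction_on α ?_
      intro a
      show Fhat (J (QuotientGroup.mk a, z)) = (QuotientGroup.mk a, z)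
      have hJ : J (QuotientGroup.mk a, z)
          = Abelianization.of ((a : G) * s (e.symm z)) := by
        show j1 (QuotientGroup.mk a) * j2 z = _
        have h1 : j1 (QuotientGroup.mk a) = Abelianization.of (a : G) := rfl
        have h2 : j2 z = Abelianization.of (s (e.symm z)) := rfl
        rw [h1, h2, ← map_mul]
      rw [hJ]
      have hF := Abelianization.lift_apply_of F ((a : G) * s (e.symm z))
      show Fhat (Abelianization.of ((a : G) * s (e.symm z))) = _
      rw [hF]
      have hmkz : (QuotientGroup.mk ((a : G) * s (e.symm z)) : G ⧸ A) = e.symm z := by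
        rw [QuotientGroup.mk_mul, (QuotientGroup.eq_one_iff (a : G)).mpr a.2, one_mul, hsp]
      apply Prod.ext
      · show F1 ((a : G) * s (e.symm z)) = QuotientGroup.mk a
        show QuotientGroup.mk _ = QuotientGroup.mk a
        congr 1
        apply Subtype.ext
        show ((a : G) * s (e.symm z)) * (s (QuotientGroup.mk ((a : G) * s (e.symm z))))⁻¹ = (a : G)
        rw [hmkz]
        group
      · show e (QuotientGroup.mk ((a : G) * s (e.symm z))) = z
        rw [hmkz, MulEquiv.apply_symm_apply]
  · rintro ⟨φ⟩
    have hAn : A.Normal := inferInstance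
    set K := (⁅(⊤ : Subgroup G), A⁆).subgroupOf A with hK
    have habel : ∀ g h : G, ⁅g, h⁆ ∈ A := by
      intro g h
      rw [← QuotientGroup.eq_one_iff]
      have h1 : (QuotientGroup.mk ⁅g, h⁆ : G ⧸ A)
          = ⁅(QuotientGroup.mk g : G ⧸ A), QuotientGroup.mk h⁆ :=
        map_commutatorElement (QuotientGroup.mk' A) g h
      rw [h1]
      apply e.injective
      rw [map_commutatorElement, map_one]
      exact commutatorElement_eq_one_iff_commute.mpr (Commute.all _ _)
    obtain ⟨x, hx⟩ := QuotientGroup.mk'_surjective A (e.symm (Multiplicative.ofAdd ((1 : ℤ), (0 : ℤ))))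
    obtain ⟨y, hy⟩ := QuotientGroup.mk'_surjective A (e.symm (Multiplicative.ofAdd ((0 : ℤ), (1 : ℤ))))
    rw [QuotientGroup.mk'_apply] at hx hy
    have hpow : ∀ (x' y' : G), (QuotientGroup.mk x' : G ⧸ A) = e.symm (Multiplicative.ofAdd (1, 0)) →
        (QuotientGroup.mk y' : G ⧸ A) = e.symm (Multiplicative.ofAdd (0, 1)) →
        ∀ m n : ℤ, (QuotientGroup.mk (x' ^ m * y' ^ n) : G ⧸ A)
          = e.symm (Multiplicative.ofAdd (m, n)) := by
      intro x' y' hx' hy' m n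
      have h1 : (QuotientGroup.mk (x' ^ m * y' ^ n) : G ⧸ A)
          = (QuotientGroup.mk x' : G ⧸ A) ^ m * (QuotientGroup.mk y' : G ⧸ A) ^ n := by
        rw [QuotientGroup.mk_mul, QuotientGroup.mk_zpow, QuotientGroup.mk_zpow]
      rw [h1, hx', hy', ← map_zpow e.symm, ← map_zpow e.symm, ← map_mul e.symm]
      congr 1
      rw [← ofAdd_zsmul, ← ofAdd_zsmul, ← ofAdd_add]
      congr 1
      simp [Prod.ext_iff]
    have hdec : ∀ g : G, ∃ k ∈ A, ∃ m n : ℤ, g = k * (x ^ m * y ^ n) := by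
      intro g
      refine ⟨g * (x ^ (e (QuotientGroup.mk g)).toAdd.1 * y ^ (e (QuotientGroup.mk g)).toAdd.2)⁻¹,
        ?_, (e (QuotientGroup.mk g)).toAdd.1, (e (QuotientGroup.mk g)).toAdd.2, by group⟩
      rw [← QuotientGroup.eq_one_iff, QuotientGroup.mk_mul, QuotientGroup.mk_inv,
        hpow x y hx hy]
      simp
    -- the surjection Φ
    let j1 : (A ⧸ K) →* Abelianization G := QuotientGroup.lift K
      (Abelianization.of.comp A.subtype) (by
        intro u hu
        have h1 : (u : G) ∈ commutator G :=
          Subgroup.commutator_mono le_top le_top (Subgroup.mem_subgroupOf.mp hu)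
        exact Abelianization.commutator_subset_ker ((Abelianization.of : G →* Abelianization G)) h1)
    let j2 : Multiplicative (ℤ × ℤ) →* Abelianization G := MonoidHom.mk'
      (fun z => Abelianization.of x ^ z.toAdd.1 * Abelianization.of y ^ z.toAdd.2) (by
        intro z w
        show Abelianization.of x ^ (z.toAdd + w.toAdd).1 *
            Abelianization.of y ^ (z.toAdd + w.toAdd).2 = _
        rw [Prod.fst_add, Prod.snd_add, zpow_add, zpow_add]
        exact mul_mul_mul_comm _ _ _ _)
    let Φ := j1.coprod j2
    have hΦs : Surjective Φ := by
      intro t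
      refine QuotientGroup.induction_on t ?_
      intro g
      obtain ⟨k, hk, m, n, rfl⟩ := hdec g
      refine ⟨(QuotientGroup.mk ⟨k, hk⟩, Multiplicative.ofAdd (m, n)), ?_⟩
      show j1 (QuotientGroup.mk ⟨k, hk⟩) * j2 (Multiplicative.ofAdd (m, n))
          = Abelianization.of (k * (x ^ m * y ^ n))
      have h1 : j1 (QuotientGroup.mk ⟨k, hk⟩) = Abelianization.of k := rfl
      have h2 : j2 (Multiplicative.ofAdd (m, n))
          = Abelianization.of x ^ m * Abelianization.of y ^ n := rfl
      rw [h1, h2, map_mul, map_mul, map_zpow, map_zpow]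
    haveI : Group.FG (A ⧸ K) := inferInstance
    haveI : AddGroup.FG (ℤ × ℤ) := Module.Finite.iff_addGroup_fg.mp inferInstance
    haveI : Group.FG ((A ⧸ K) × Multiplicative (ℤ × ℤ)) := fgProd
    let σ := φ.toMonoidHom.comp Φ
    have hσs : Surjective σ := φ.surjective.comp hΦs
    have hσi : Injective σ := myHopfian σ hσs
    have hcA : ⁅x, y⁆ ∈ A := habel x y
    have hofc : Abelianization.of ⁅x, y⁆ = 1 :=
      Abelianization.commutator_subset_ker ((Abelianization.of : G →* Abelianization G))
        (Subgroup.commutator_mem_commutator (Subgroup.mem_top x) (Subgroup.mem_top y))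
    have hc1 : σ ((QuotientGroup.mk ⟨⁅x, y⁆, hcA⟩ : A ⧸ K), (1 : Multiplicative (ℤ × ℤ))) = σ 1 := by
      rw [map_one]
      show φ (Φ _) = 1
      have h1 : Φ ((QuotientGroup.mk ⟨⁅x, y⁆, hcA⟩ : A ⧸ K), (1 : Multiplicative (ℤ × ℤ)))
          = Abelianization.of ⁅x, y⁆ := by
        show j1 (QuotientGroup.mk ⟨⁅x, y⁆, hcA⟩) * j2 1 = _
        rw [map_one, mul_one]
        rfl
      rw [h1, hofc, map_one]
    have hc2 := hσi hc1
    have hcK : ⁅x, y⁆ ∈ ⁅(⊤ : Subgroup G), A⁆ := by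
      have h3 : (QuotientGroup.mk ⟨⁅x, y⁆, hcA⟩ : A ⧸ K) = 1 := (Prod.ext_iff.mp hc2).1
      exact Subgroup.mem_subgroupOf.mp ((QuotientGroup.eq_one_iff _).mp h3)
    -- extract a, b
    have hcD : ⁅x, y⁆ ∈ Dsub A x y := commutator_le_Dsub A x y habel hdec hcK
    obtain ⟨a, ha, b'', hb'', hcEq⟩ := (mem_Dsub A).mp hcD
    have hb : b''⁻¹ ∈ A := A.inv_mem hb''
    set b := b''⁻¹ with hbdef
    have hcEq' : ⁅x, y⁆ = ⁅y, a⁆ * ⁅x, b⁆⁻¹ := by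
      rw [hbdef, commEl_inv_right A x hb'', inv_inv]
      exact hcEq
    have ha₁ : y * a * y⁻¹ ∈ A := hAn.conj_mem a ha y
    have hb₁ : x * b * x⁻¹ ∈ A := hAn.conj_mem b hb x
    have hsub : (⟨⁅x, y⁆, hcA⟩ : A) = ⟨y * a * y⁻¹, ha₁⟩ * (⟨a, ha⟩ : A)⁻¹ *
        (⟨x * b * x⁻¹, hb₁⟩ * (⟨b, hb⟩ : A)⁻¹)⁻¹ := by
      apply Subtype.ext
      show ⁅x, y⁆ = (y * a * y⁻¹) * a⁻¹ * ((x * b * x⁻¹) * b⁻¹)⁻¹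
      rw [hcEq']
      simp only [commutatorElement_def]
    have hGoal : b * (y * a * y⁻¹) * ⁅x, y⁆⁻¹ = a * (x * b * x⁻¹) := by
      have := mulAux (⟨a, ha⟩ : A) ⟨b, hb⟩ ⟨y * a * y⁻¹, ha₁⟩ ⟨x * b * x⁻¹, hb₁⟩
        ⟨⁅x, y⁆, hcA⟩ hsub
      have h4 := congrArg (A.subtype) this
      simpa using h4
    have hcomm : (a * x) * (b * y) = (b * y) * (a * x) := by
      have h1 : (a * x) * (b * y) = (a * (x * b * x⁻¹)) * (x * y) := by group
      have h2 : (b * y) * (a * x) = (b * (y * a * y⁻¹) * ⁅x, y⁆⁻¹) * (x * y) := by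
        simp only [commutatorElement_def]; group
      rw [h1, h2, hGoal]
    -- build the section
    have hu : (QuotientGroup.mk (a * x) : G ⧸ A) = e.symm (Multiplicative.ofAdd (1, 0)) := by
      rw [QuotientGroup.mk_mul, (QuotientGroup.eq_one_iff a).mpr ha, one_mul, hx]
    have hv : (QuotientGroup.mk (b * y) : G ⧸ A) = e.symm (Multiplicative.ofAdd (0, 1)) := by
      rw [QuotientGroup.mk_mul, (QuotientGroup.eq_one_iff b).mpr hb, one_mul, hy]
    have hC : Commute (a * x) (b * y) := hcomm
    refine ⟨MonoidHom.mk' (fun z => (a * x) ^ (e z).toAdd.1 * (b * y) ^ (e z).toAdd.2) ?_, ?_⟩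
    · intro z w
      show (a * x) ^ (e (z * w)).toAdd.1 * (b * y) ^ (e (z * w)).toAdd.2
          = (a * x) ^ (e z).toAdd.1 * (b * y) ^ (e z).toAdd.2 *
            ((a * x) ^ (e w).toAdd.1 * (b * y) ^ (e w).toAdd.2)
      rw [map_mul e]
      have ht : (e z * e w).toAdd = (e z).toAdd + (e w).toAdd := rfl
      rw [ht, Prod.fst_add, Prod.snd_add, zpow_add, zpow_add]
      have hC' : Commute ((b * y) ^ (e z).toAdd.2) ((a * x) ^ (e w).toAdd.1) :=
        (hC.symm).zpow_zpow _ _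
      calc (a * x) ^ (e z).toAdd.1 * (a * x) ^ (e w).toAdd.1 *
            ((b * y) ^ (e z).toAdd.2 * (b * y) ^ (e w).toAdd.2)
          = (a * x) ^ (e z).toAdd.1 * ((a * x) ^ (e w).toAdd.1 * (b * y) ^ (e z).toAdd.2) *
            (b * y) ^ (e w).toAdd.2 := by
            rw [mul_assoc, mul_assoc, mul_assoc]
        _ = (a * x) ^ (e z).toAdd.1 * ((b * y) ^ (e z).toAdd.2 * (a * x) ^ (e w).toAdd.1) *
            (b * y) ^ (e w).toAdd.2 := by rw [hC'.eq]
        _ = (a * x) ^ (e z).toAdd.1 * (b * y) ^ (e z).toAdd.2 *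
            ((a * x) ^ (e w).toAdd.1 * (b * y) ^ (e w).toAdd.2) := by
            rw [mul_assoc, mul_assoc, mul_assoc]
    · apply MonoidHom.ext
      intro z
      show QuotientGroup.mk ((a * x) ^ (e z).toAdd.1 * (b * y) ^ (e z).toAdd.2) = z
      rw [hpow (a * x) (b * y) hu hv]
      simp
end

section
/- Let π be the presented group with generators u, v, x, y and relators [u,x], [u,y], [v,x], [v,y], [x,y], [u,v]x⁻¹ (so x and y are central and [u,v] = x; this is the integer Heisenberg group times ℤ), and let N be the normal closure of {x, y} in π. Then the quotient homomorphism π → π/N admits no group-homomorphism section. -/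
open scoped commutatorElement

/-- Generators: `u = 0`, `v = 1`, `x = 2`, `y = 3`.  Relators: `[u,x]`, `[u,y]`,
`[v,x]`, `[v,y]`, `[x,y]`, `[u,v]x⁻¹`.  This presents the integer Heisenberg group
times `ℤ`, the fundamental group of a `Nil³ × E¹`-manifold which is a torus bundle
over the torus with trivial monodromy. -/
abbrev heisenbergTimesZRels : Set (FreeGroup (Fin 4)) :=
  { ⁅(FreeGroup.of 0 : FreeGroup (Fin 4)), FreeGroup.of 2⁆,
    ⁅(FreeGroup.of 0 : FreeGroup (Fin 4)), FreeGroup.of 3⁆,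
    ⁅(FreeGroup.of 1 : FreeGroup (Fin 4)), FreeGroup.of 2⁆,
    ⁅(FreeGroup.of 1 : FreeGroup (Fin 4)), FreeGroup.of 3⁆,
    ⁅(FreeGroup.of 2 : FreeGroup (Fin 4)), FreeGroup.of 3⁆,
    ⁅(FreeGroup.of 0 : FreeGroup (Fin 4)), FreeGroup.of 1⁆ * (FreeGroup.of 2)⁻¹ }

/-- The fibre subgroup: the normal closure of `{x, y}`. -/
abbrev heisenbergTimesZFibre : Subgroup (PresentedGroup heisenbergTimesZRels) :=
  Subgroup.normalClosure {PresentedGroup.of 2, PresentedGroup.of 3}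

@[ext]
structure Heis where
  a : ℤ
  b : ℤ
  c : ℤ

namespace Heis

instance : Mul Heis := ⟨fun g h => ⟨g.a + h.a, g.b + h.b, g.c + h.c + g.a * h.b⟩⟩
instance : One Heis := ⟨⟨0, 0, 0⟩⟩
instance : Inv Heis := ⟨fun g => ⟨-g.a, -g.b, -g.c + g.a * g.b⟩⟩

@[simp] lemma mul_a (g h : Heis) : (g * h).a = g.a + h.a := rfl
@[simp] lemma mul_b (g h : Heis) : (g * h).b = g.b + h.b := rfl
@[simp] lemma mul_c (g h : Heis) : (g * h).c = g.c + h.c + g.a * h.b := rfl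
@[simp] lemma inv_a (g : Heis) : (g⁻¹).a = -g.a := rfl
@[simp] lemma inv_b (g : Heis) : (g⁻¹).b = -g.b := rfl
@[simp] lemma inv_c (g : Heis) : (g⁻¹).c = -g.c + g.a * g.b := rfl
@[simp] lemma one_a : (1 : Heis).a = 0 := rfl
@[simp] lemma one_b : (1 : Heis).b = 0 := rfl
@[simp] lemma one_c : (1 : Heis).c = 0 := rfl

instance : Group Heis where
  mul_assoc g h k := by ext <;> simp <;> ring
  one_mul g := by ext <;> simp
  mul_one g := by ext <;> simp
  inv_mul_cancel g := by ext <;> simp <;> ring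

/-- Center-like subgroup: a = b = 0. -/
def Z : Subgroup Heis where
  carrier := {g | g.a = 0 ∧ g.b = 0}
  one_mem' := ⟨rfl, rfl⟩
  mul_mem' := by rintro g h ⟨h1, h2⟩ ⟨h3, h4⟩; simp_all
  inv_mem' := by rintro g ⟨h1, h2⟩; simp_all

instance : Z.Normal := by
  constructor
  rintro n ⟨h1, h2⟩ g
  refine ⟨?_, ?_⟩ <;> simp [h1, h2]

lemma comm_c {A B : Heis} (hAa : A.a = 1) (hAb : A.b = 0) (hBa : B.a = 0) (hBb : B.b = 1) :
    (⁅A, B⁆).c = 1 := by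
  simp [commutatorElement_def, hAa, hAb, hBa, hBb]; ring

end Heis

open PresentedGroup

def hf : Fin 4 → Heis := ![⟨1,0,0⟩, ⟨0,1,0⟩, ⟨0,0,1⟩, 1]

lemma hrels : ∀ r ∈ heisenbergTimesZRels, FreeGroup.lift hf r = 1 := by
  intro r hr
  simp only [heisenbergTimesZRels, Set.mem_insert_iff, Set.mem_singleton_iff] at hr
  rcases hr with rfl | rfl | rfl | rfl | rfl | rfl <;>
    simp [commutatorElement_def, hf] <;> ext <;> simp <;> ring

def φ : PresentedGroup heisenbergTimesZRels →* Heis := toGroup hrels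

/-- The quotient map `π → π/N` (the torus bundle over the torus with group the
integer Heisenberg group times `ℤ`) admits no group-homomorphism section. -/
theorem heisenbergTimesZ_bundle_has_no_section :
    ¬ ∃ s : (PresentedGroup heisenbergTimesZRels ⧸ heisenbergTimesZFibre) →*
        PresentedGroup heisenbergTimesZRels,
      (QuotientGroup.mk' heisenbergTimesZFibre).comp s =
        MonoidHom.id (PresentedGroup heisenbergTimesZRels ⧸ heisenbergTimesZFibre) := by
  rintro ⟨s, hs⟩
  set p := QuotientGroup.mk' heisenbergTimesZFibre
  have hsec : ∀ q, p (s q) = q := fun q => DFunLike.congr_fun hs q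
  set a := s (p (of 0)) with ha
  set b := s (p (of 1)) with hb
  -- the relation [u,v] = x in π
  have hrel : (⁅(of 0 : PresentedGroup heisenbergTimesZRels), (of 1 : PresentedGroup heisenbergTimesZRels)⁆) = of 2 := by
    have hmem : ⁅(FreeGroup.of 0 : FreeGroup (Fin 4)), FreeGroup.of 1⁆ * (FreeGroup.of 2)⁻¹
        ∈ Subgroup.normalClosure heisenbergTimesZRels :=
      Subgroup.subset_normalClosure (by simp [heisenbergTimesZRels])
    have h1 : (mk heisenbergTimesZRels)
        (⁅(FreeGroup.of 0 : FreeGroup (Fin 4)), FreeGroup.of 1⁆ * (FreeGroup.of 2)⁻¹) = 1 :=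
      (QuotientGroup.eq_one_iff _).2 hmem
    simp only [map_mul, map_inv, map_commutatorElement] at h1
    have := mul_inv_eq_one.mp h1
    exact this
  -- x ∈ N, so [ū, v̄] = 1 in the quotient, hence [a,b] = 1
  have hxN : (of 2 : PresentedGroup heisenbergTimesZRels) ∈ heisenbergTimesZFibre :=
    Subgroup.subset_normalClosure (by simp)
  have hcomm : ⁅a, b⁆ = 1 := by
    rw [ha, hb, ← map_commutatorElement, ← map_commutatorElement, hrel]
    have hp2 : p (of 2) = 1 := (QuotientGroup.eq_one_iff _).mpr hxN
    rw [hp2, map_one]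
  -- φ maps N into Z
  have hNZ : heisenbergTimesZFibre ≤ Heis.Z.comap φ := by
    apply Subgroup.normalClosure_le_normal
    rintro g (rfl | rfl) <;>
      simp only [Set.mem_preimage, SetLike.mem_coe, Subgroup.mem_comap, φ, toGroup.of] <;>
      exact ⟨rfl, rfl⟩
  -- component facts for φ a and φ b
  have haN : a * (of 0)⁻¹ ∈ heisenbergTimesZFibre := by
    rw [← QuotientGroup.ker_mk' heisenbergTimesZFibre, MonoidHom.mem_ker, map_mul, map_inv,
      hsec]
    exact mul_inv_cancel _
  have hbN : b * (of 1)⁻¹ ∈ heisenbergTimesZFibre := by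
    rw [← QuotientGroup.ker_mk' heisenbergTimesZFibre, MonoidHom.mem_ker, map_mul, map_inv,
      hsec]
    exact mul_inv_cancel _
  have hA := hNZ haN
  have hB := hNZ hbN
  simp only [Subgroup.mem_comap, map_mul, map_inv] at hA hB
  have hφ0 : φ (of 0) = (⟨1,0,0⟩ : Heis) := toGroup.of hrels
  have hφ1 : φ (of 1) = (⟨0,1,0⟩ : Heis) := toGroup.of hrels
  rw [hφ0] at hA; rw [hφ1] at hB
  obtain ⟨hA1, hA2⟩ := hA
  obtain ⟨hB1, hB2⟩ := hB
  simp only [Heis.mul_a, Heis.mul_b, Heis.inv_a, Heis.inv_b] at hA1 hA2 hB1 hB2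
  have hAa : (φ a).a = 1 := by omega
  have hAb : (φ a).b = 0 := by omega
  have hBa : (φ b).a = 0 := by omega
  have hBb : (φ b).b = 1 := by omega
  have : (⁅φ a, φ b⁆).c = 1 := Heis.comm_c hAa hAb hBa hBb
  rw [← map_commutatorElement, hcomm, map_one, Heis.one_c] at this
  exact one_ne_zero this.symm
end

section
/- Let κ be the Klein bottle group, the presented group on two generators x, y with the single relator x y x⁻¹ y (i.e. x y x⁻¹ = y⁻¹). Then the center of κ is the cyclic subgroup generated by the image of x²; that is, the center of κ equals the set of integer powers of x². -/
/-- The Klein bottle group `κ = ⟨x, y | xyx⁻¹y⟩`, with `x = 0` and `y = 1`. -/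
abbrev kleinBottleRels : Set (FreeGroup (Fin 2)) :=
  { (FreeGroup.of 0 : FreeGroup (Fin 2)) * FreeGroup.of 1 * (FreeGroup.of 0)⁻¹ *
      FreeGroup.of 1 }

namespace KleinAux

abbrev A := Multiplicative ℤ

noncomputable def φ : A →* MulAut A := zpowersHom _ (MulEquiv.inv A)

abbrev K := SemidirectProduct A A φ

lemma inv_sq : (MulEquiv.inv A) ^ 2 = 1 := by
  ext a
  simp [sq, MulAut.mul_apply]

lemma phi_apply (g n : A) :
    φ g n = if Even (Multiplicative.toAdd g) then n else n⁻¹ := by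
  have h : φ g = (MulEquiv.inv A) ^ (Multiplicative.toAdd g) := zpowersHom_apply _ _ _
  rcases Int.even_or_odd (Multiplicative.toAdd g) with hev | hodd
  · obtain ⟨m, hm⟩ := hev
    have h1 : φ g = 1 := by
      rw [h, hm, ← two_mul, zpow_mul, show ((2:ℤ)) = ((2:ℕ):ℤ) by norm_num,
        zpow_natCast, inv_sq, one_zpow]
    rw [h1, if_pos ⟨m, hm⟩]
    rfl
  · obtain ⟨m, hm⟩ := hodd
    have h1 : φ g = MulEquiv.inv A := by
      rw [h, hm, zpow_add, zpow_mul, show ((2:ℤ)) = ((2:ℕ):ℤ) by norm_num,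
        zpow_natCast, inv_sq, one_zpow, one_mul, zpow_one]
    rw [h1, if_neg (Int.not_even_iff_odd.mpr ⟨m, hm⟩)]
    rfl

abbrev κ := PresentedGroup kleinBottleRels

noncomputable abbrev x : κ := PresentedGroup.of 0
noncomputable abbrev y : κ := PresentedGroup.of 1

lemma rel : x * y * x⁻¹ * y = 1 := by
  have h : ((FreeGroup.of 0 : FreeGroup (Fin 2)) * FreeGroup.of 1 * (FreeGroup.of 0)⁻¹ *
      FreeGroup.of 1) ∈ Subgroup.normalClosure kleinBottleRels :=
    Subgroup.subset_normalClosure rfl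
  have := (QuotientGroup.eq_one_iff (G := FreeGroup (Fin 2))
    (N := Subgroup.normalClosure kleinBottleRels) _).mpr h
  simp only [PresentedGroup.of, ← map_mul, ← map_inv]
  exact this

lemma conj_y : x * y * x⁻¹ = y⁻¹ := eq_inv_of_mul_eq_one_left rel

lemma conj_y_pow (n : ℤ) : x * y ^ n * x⁻¹ = y ^ (-n) := by
  have h : x * y ^ n * x⁻¹ = (x * y * x⁻¹) ^ n := by
    rw [← MulAut.conj_apply, ← MulAut.conj_apply, map_zpow]
  rw [h, conj_y, zpow_neg, inv_zpow]

lemma commute_x2_y_pow (n : ℤ) : Commute (x ^ (2:ℤ)) (y ^ n) := by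
  have h1 : x ^ (2:ℤ) * y ^ n * (x ^ (2:ℤ))⁻¹ = y ^ n := by
    rw [zpow_two, mul_inv_rev]
    calc x * x * y ^ n * (x⁻¹ * x⁻¹) = x * (x * y ^ n * x⁻¹) * x⁻¹ := by group
    _ = x * y ^ (-n) * x⁻¹ := by rw [conj_y_pow]
    _ = y ^ (- -n) := conj_y_pow _
    _ = y ^ n := by simp
  exact (commute_iff_eq _ _).mpr (mul_inv_eq_iff_eq_mul.mp h1)

lemma conj_pow (k n : ℤ) :
    x ^ k * y ^ n * (x ^ k)⁻¹ = if Even k then y ^ n else y ^ (-n) := by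
  rcases Int.even_or_odd k with hev | hodd
  · obtain ⟨m, hm⟩ := hev
    have hcomm : Commute (x ^ k) (y ^ n) := by
      rw [hm, ← two_mul, zpow_mul]
      exact (commute_x2_y_pow n).zpow_left m
    rw [if_pos ⟨m, hm⟩, hcomm.eq, mul_inv_cancel_right]
  · obtain ⟨m, hm⟩ := hodd
    have hk : x ^ k = (x ^ (2:ℤ)) ^ m * x := by
      rw [← zpow_mul, ← zpow_add_one, hm, two_mul]
    have hcomm : Commute ((x ^ (2:ℤ)) ^ m) (y ^ (-n)) := (commute_x2_y_pow _).zpow_left m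
    rw [if_neg (Int.not_even_iff_odd.mpr ⟨m, hm⟩), hk, mul_inv_rev]
    calc (x ^ (2:ℤ)) ^ m * x * y ^ n * (x⁻¹ * ((x ^ (2:ℤ)) ^ m)⁻¹)
        = (x ^ (2:ℤ)) ^ m * (x * y ^ n * x⁻¹) * ((x ^ (2:ℤ)) ^ m)⁻¹ := by group
    _ = (x ^ (2:ℤ)) ^ m * y ^ (-n) * ((x ^ (2:ℤ)) ^ m)⁻¹ := by rw [conj_y_pow]
    _ = y ^ (-n) := by rw [hcomm.eq, mul_inv_cancel_right]

noncomputable def F : Fin 2 → K :=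
  ![SemidirectProduct.inr (Multiplicative.ofAdd 1),
    SemidirectProduct.inl (Multiplicative.ofAdd 1)]

lemma hF : ∀ r ∈ kleinBottleRels, FreeGroup.lift F r = 1 := by
  rintro r rfl
  simp only [map_mul, map_inv, FreeGroup.lift_apply_of, F, Matrix.cons_val_zero, Matrix.cons_val_one,
    Matrix.head_cons]
  apply SemidirectProduct.ext
  · simp [SemidirectProduct.mul_left, SemidirectProduct.inv_left, SemidirectProduct.left_inl,
      SemidirectProduct.left_inr, SemidirectProduct.right_inl, SemidirectProduct.right_inr,
      SemidirectProduct.mul_right, SemidirectProduct.inv_right, phi_apply,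
      Int.not_even_iff_odd.mpr odd_one]
  · simp [SemidirectProduct.mul_right, SemidirectProduct.inv_right,
      SemidirectProduct.right_inl, SemidirectProduct.right_inr]

/-- The map `κ → K`. -/
noncomputable def f : κ →* K := PresentedGroup.toGroup hF

lemma f_x : f x = SemidirectProduct.inr (Multiplicative.ofAdd 1) := by
  have h : f x = F 0 := PresentedGroup.toGroup.of hF
  rw [h]; rfl

lemma f_y : f y = SemidirectProduct.inl (Multiplicative.ofAdd 1) := by
  have h : f y = F 1 := PresentedGroup.toGroup.of hF
  rw [h]; rfl

/-- The map `K → κ`. -/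
noncomputable def g : K →* κ :=
  SemidirectProduct.lift (zpowersHom κ y) (zpowersHom κ x) (by
    intro a
    refine MonoidHom.ext fun n => ?_
    simp only [MonoidHom.comp_apply, MulEquiv.coe_toMonoidHom, MulAut.conj_apply,
      zpowersHom_apply]
    rw [phi_apply, conj_pow (Multiplicative.toAdd a) (Multiplicative.toAdd n)]
    split <;> simp)

lemma g_f : g.comp f = MonoidHom.id κ := by
  apply PresentedGroup.ext
  intro i
  fin_cases i
  · show g (f x) = x
    rw [f_x]; simp [g]
  · show g (f y) = y
    rw [f_y]; simp [g]

lemma f_g : f.comp g = MonoidHom.id K := by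
  apply SemidirectProduct.hom_ext
  · apply MonoidHom.ext_mint
    show f (g (SemidirectProduct.inl (Multiplicative.ofAdd 1))) = _
    simp [g, f_y]
  · apply MonoidHom.ext_mint
    show f (g (SemidirectProduct.inr (Multiplicative.ofAdd 1))) = _
    simp [g, f_x]

lemma g_f_apply (a : κ) : g (f a) = a := DFunLike.congr_fun g_f a

lemma f_g_apply (b : K) : f (g b) = b := DFunLike.congr_fun f_g b

lemma f_inj : Function.Injective f := Function.LeftInverse.injective g_f_apply

lemma f_surj : Function.Surjective f := fun b => ⟨g b, f_g_apply b⟩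

lemma center_K : Subgroup.center K =
    Subgroup.zpowers (SemidirectProduct.inr (Multiplicative.ofAdd 2)) := by
  apply le_antisymm
  · intro z hz
    rw [Subgroup.mem_center_iff] at hz
    have h1 := hz (SemidirectProduct.inr (Multiplicative.ofAdd 1))
    have h2 := hz (SemidirectProduct.inl (Multiplicative.ofAdd 1))
    have hn : z.left = 1 := by
      have hc := congrArg SemidirectProduct.left h1
      simp only [SemidirectProduct.mul_left, SemidirectProduct.left_inr,
        SemidirectProduct.right_inr, phi_apply] at hc
      have h1' : z.left⁻¹ = z.left := by
        simpa [Int.not_even_iff_odd.mpr odd_one] using hc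
      have ht := congrArg Multiplicative.toAdd h1'
      simp only [toAdd_inv] at ht
      have h0 : Multiplicative.toAdd z.left = 0 := by omega
      have := congrArg Multiplicative.ofAdd h0
      simpa using this
    have hg : Even (Multiplicative.toAdd z.right) := by
      have hc := congrArg SemidirectProduct.left h2
      by_contra hodd
      simp only [SemidirectProduct.mul_left, SemidirectProduct.left_inl,
        SemidirectProduct.right_inl, phi_apply, if_neg hodd, map_one, one_mul, mul_one] at hc
      simp only [MulAut.one_apply] at hc
      have h := congrArg Multiplicative.toAdd hc
      simp only [toAdd_mul, toAdd_inv, toAdd_ofAdd] at h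
      omega
    obtain ⟨m, hm⟩ := hg
    refine ⟨m, ?_⟩
    show SemidirectProduct.inr (Multiplicative.ofAdd 2) ^ m = z
    have hz2 : z = SemidirectProduct.inr z.right := by
      apply SemidirectProduct.ext
      · rw [hn, SemidirectProduct.left_inr]
      · rw [SemidirectProduct.right_inr]
    rw [hz2, show (SemidirectProduct.inr (Multiplicative.ofAdd 2) : K) ^ m
      = SemidirectProduct.inr ((Multiplicative.ofAdd 2) ^ m) from
      (map_zpow (SemidirectProduct.inr : A →* K) _ m).symm]
    congr 1
    have h2 : (Multiplicative.ofAdd (2:ℤ)) ^ m = Multiplicative.ofAdd (m • (2:ℤ)) :=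
      (ofAdd_zsmul m (2:ℤ)).symm
    rw [h2]
    have h3 : m • (2:ℤ) = Multiplicative.toAdd z.right := by
      rw [hm]; simp [smul_eq_mul]; ring
    rw [h3]
    simp
  · rw [Subgroup.zpowers_le, Subgroup.mem_center_iff]
    intro z
    apply SemidirectProduct.ext
    · simp only [SemidirectProduct.mul_left, SemidirectProduct.left_inr,
        SemidirectProduct.right_inr, phi_apply]
      rw [if_pos (by simp : Even (Multiplicative.toAdd (Multiplicative.ofAdd (2:ℤ))))]
      simp
    · simp only [SemidirectProduct.mul_right, SemidirectProduct.right_inr]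
      exact mul_comm _ _

end KleinAux

/-- The center of the Klein bottle group is the cyclic subgroup generated by the image
of `x²`. -/
theorem center_kleinBottleGroup :
    Subgroup.center (PresentedGroup kleinBottleRels) =
      Subgroup.zpowers ((PresentedGroup.of 0 : PresentedGroup kleinBottleRels) ^ 2) := by
  classical
  ext a
  have hmem : a ∈ Subgroup.center KleinAux.κ ↔ KleinAux.f a ∈ Subgroup.center KleinAux.K := by
    constructor
    · intro ha
      rw [Subgroup.mem_center_iff] at ha ⊢
      intro c
      obtain ⟨b, rfl⟩ := KleinAux.f_surj c
      rw [← map_mul, ← map_mul, ha b]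
    · intro ha
      rw [Subgroup.mem_center_iff] at ha ⊢
      intro b
      apply KleinAux.f_inj
      rw [map_mul, map_mul]
      exact ha (KleinAux.f b)
  rw [hmem, KleinAux.center_K]
  have hfx2 : KleinAux.f ((PresentedGroup.of 0 : PresentedGroup kleinBottleRels) ^ 2)
      = SemidirectProduct.inr (Multiplicative.ofAdd 2) := by
    rw [map_pow, show KleinAux.f (PresentedGroup.of 0) = _ from KleinAux.f_x, ← map_pow]
    congr 1
  rw [Subgroup.mem_zpowers_iff, Subgroup.mem_zpowers_iff]
  constructor
  · rintro ⟨k, hk⟩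
    refine ⟨k, ?_⟩
    apply KleinAux.f_inj
    rw [map_zpow, hfx2, hk]
  · rintro ⟨k, rfl⟩
    exact ⟨k, by rw [map_zpow, hfx2]⟩
end
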